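/- Let A be an associative algebra over a field of characteristic zero, let U be a nilpotent element, and let ∂ be a derivation of A. Then (∂ exp(U))·exp(-U) = D(ad U)(∂U), where D(x) = (e^x - 1)/x and ad U denotes the commutator operator a ↦ Ua - aU, interpreted as the finite sum ∑_{n≥0} (ad U)^n/(n+1)! applied to ∂U. -/

import Mathlib

open Finset

private lemma alt_sum_choose' (n p : ℕ) :
    ∑ m ∈ range (p + 1), (-1 : ℚ) ^ m * ((n + 1).choose m) = (-1 : ℚ) ^ p * (n.choose p) := by
  induction p with
  | zero => simp
  | succ p ih =>
    rw [sum_range_succ, ih, Nat.choose_succ_succ (n := n) (k := p)]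
    push_cast
    ring

private lemma coef_eq' (i j : ℕ) :
    ∑ m ∈ range (j + 1),
        (((i + (j - m) + 1).factorial : ℚ))⁻¹ * ((-1) ^ m * ((m.factorial : ℚ))⁻¹) =
      (((i + j + 1).factorial : ℚ))⁻¹ * ((-1) ^ j * ((i + j).choose i)) := by
  have h1 : ∀ m ∈ range (j + 1),
      (((i + (j - m) + 1).factorial : ℚ))⁻¹ * ((-1) ^ m * ((m.factorial : ℚ))⁻¹) =
      (((i + j + 1).factorial : ℚ))⁻¹ * ((-1) ^ m * (((i + j + 1).choose m : ℚ))) := by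
    intro m hm
    have hm' : m ≤ j := by simpa [Nat.lt_succ_iff] using hm
    rw [Nat.cast_choose ℚ (show m ≤ i + j + 1 by omega)]
    have h2 : i + j + 1 - m = i + (j - m) + 1 := by omega
    rw [h2]
    have f1 : ((i + (j - m) + 1).factorial : ℚ) ≠ 0 :=
      Nat.cast_ne_zero.mpr (Nat.factorial_ne_zero _)
    have f2 : ((m.factorial : ℚ)) ≠ 0 := Nat.cast_ne_zero.mpr (Nat.factorial_ne_zero _)
    have f3 : (((i + j + 1).factorial : ℚ)) ≠ 0 := Nat.cast_ne_zero.mpr (Nat.factorial_ne_zero _)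
    field_simp
  rw [sum_congr rfl h1, ← mul_sum, alt_sum_choose' (i + j) j, Nat.choose_symm_add.symm]

private lemma tri' {M : Type*} [AddCommMonoid M] (K : ℕ) (f : ℕ → ℕ → M) :
    ∑ n ∈ range K, ∑ k ∈ range (n + 1), f k (n - k)
      = ∑ i ∈ range K, ∑ l ∈ range (K - i), f i l := by
  induction K with
  | zero => simp
  | succ K ih =>
    rw [sum_range_succ, ih]
    conv_rhs => rw [sum_range_succ]
    have h2 : ∑ i ∈ range K, ∑ l ∈ range (K + 1 - i), f i l
        = ∑ i ∈ range K, (∑ l ∈ range (K - i), f i l + f i (K - i)) :=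
      sum_congr rfl fun i hi => by
        have hK : K + 1 - i = (K - i) + 1 := by have := mem_range.mp hi; omega
        rw [hK, sum_range_succ]
    rw [h2, sum_add_distrib, sum_range_succ (fun k => f k (K - k)) K]
    simp [add_assoc, Nat.sub_self]

private lemma D_pow' {A : Type*} [Ring A] [Algebra ℚ A] (D : A →ₗ[ℚ] A)
    (hD : ∀ a b : A, D (a * b) = D a * b + a * D b) (U : A) (n : ℕ) :
    D (U ^ n) = ∑ k ∈ range n, U ^ k * D U * U ^ (n - 1 - k) := by
  induction n with
  | zero =>
    have h1 : D 1 = 0 := by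
      have := hD 1 1; simpa using this
    simpa using h1
  | succ n ih =>
    rw [pow_succ', hD, ih, Finset.mul_sum, Finset.sum_range_succ', add_comm]
    congr 1
    · refine Finset.sum_congr rfl fun k hk => ?_
      rw [← mul_assoc, ← mul_assoc, ← pow_succ']
      congr 2
      omega
    · simp

private lemma ad_pow' {A : Type*} [Ring A] [Algebra ℚ A] (U V : A) (n : ℕ) :
    (fun a => U * a - a * U)^[n] V =
    ∑ i ∈ range (n + 1), ((-1 : ℚ) ^ (n - i) * (n.choose i)) • (U ^ i * V * U ^ (n - i)) := by
  have h1 : (fun a => U * a - a * U) = ⇑(LinearMap.mulLeft ℚ U - LinearMap.mulRight ℚ U) := by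
    ext a; simp
  have hc : Commute (LinearMap.mulLeft ℚ U) (-(LinearMap.mulRight ℚ U)) :=
    (LinearMap.commute_mulLeft_right (R := ℚ) U U).neg_right
  rw [h1, ← Module.End.pow_apply, sub_eq_add_neg, hc.add_pow]
  rw [LinearMap.sum_apply]
  refine Finset.sum_congr rfl fun i hi => ?_
  have h2 : (-(LinearMap.mulRight ℚ U)) ^ (n - i)
      = (-1 : ℚ) ^ (n - i) • (LinearMap.mulRight ℚ U) ^ (n - i) := by
    rw [← neg_one_smul ℚ (LinearMap.mulRight ℚ U), smul_pow]
  rw [h2]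
  simp only [Module.End.mul_apply, LinearMap.smul_apply, LinearMap.pow_mulLeft,
    LinearMap.pow_mulRight, LinearMap.mulLeft_apply, LinearMap.mulRight_apply,
    Module.End.natCast_apply, ← Nat.cast_smul_eq_nsmul ℚ, smul_mul_assoc, mul_smul_comm,
    smul_smul]
  rw [mul_assoc]

theorem deriv_exp_mul_exp_neg
    {A : Type*} [Ring A] [Algebra ℚ A] (U : A) (N : ℕ) (hU : U ^ N = 0)
    (D : A →ₗ[ℚ] A) (hD : ∀ a b : A, D (a * b) = D a * b + a * D b) :
    D (∑ n ∈ range (2 * N + 1), ((n.factorial : ℚ)⁻¹) • U ^ n) *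
      (∑ n ∈ range (2 * N + 1), ((n.factorial : ℚ)⁻¹) • (-U) ^ n) =
    ∑ n ∈ range (2 * N + 1),
      (((n + 1).factorial : ℚ)⁻¹) • (fun a => U * a - a * U)^[n] (D U) := by
  rcases Nat.eq_zero_or_pos N with hN | hN
  · subst hN
    have h0 : (1 : A) = 0 := by simpa using hU
    have hall : ∀ a : A, a = 0 := fun a => by
      calc a = a * 1 := (mul_one a).symm
        _ = a * 0 := by rw [h0]
        _ = 0 := mul_zero a
    exact (hall _).trans (hall _).symm
  -- vanishing of the basic terms
  have hS : ∀ i j : ℕ, N ≤ i ∨ N ≤ j → U ^ i * D U * U ^ j = 0 := by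
    intro i j hij
    rcases hij with h | h
    · rw [pow_eq_zero_of_le h hU, zero_mul, zero_mul]
    · rw [pow_eq_zero_of_le h hU, mul_zero]
  -- Step 1: expand the left-hand side as a triple sum
  have hL1 : D (∑ n ∈ range (2 * N + 1), ((n.factorial : ℚ)⁻¹) • U ^ n) *
      (∑ n ∈ range (2 * N + 1), ((n.factorial : ℚ)⁻¹) • (-U) ^ n) =
      ∑ n ∈ range (2 * N + 1), ∑ m ∈ range (2 * N + 1), ∑ k ∈ range n,
        (((n.factorial : ℚ))⁻¹ * ((-1) ^ m * ((m.factorial : ℚ))⁻¹)) •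
          (U ^ k * D U * U ^ (n - 1 - k + m)) := by
    rw [map_sum, Finset.sum_mul_sum]
    refine sum_congr rfl fun n hn => sum_congr rfl fun m hm => ?_
    have hneg : (-U) ^ m = ((-1 : ℚ) ^ m) • U ^ m := by
      rw [← neg_one_smul ℚ U, smul_pow]
    rw [map_smul, hneg, smul_smul, smul_mul_assoc, mul_smul_comm, smul_smul,
      D_pow' D hD U n, sum_mul, Finset.smul_sum]
    refine sum_congr rfl fun k hk => ?_
    rw [mul_assoc (U ^ k * D U), ← pow_add]
    congr 1
    ring
  rw [hL1]
  -- Step 2: rewrite the right-hand side as a double sum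
  have hR1 : (∑ n ∈ range (2 * N + 1),
      (((n + 1).factorial : ℚ)⁻¹) • (fun a => U * a - a * U)^[n] (D U)) =
      ∑ n ∈ range (2 * N + 1), ∑ i ∈ range (n + 1),
        ((((n + 1).factorial : ℚ))⁻¹ * ((-1) ^ (n - i) * (n.choose i))) •
          (U ^ i * D U * U ^ (n - i)) := by
    refine sum_congr rfl fun n hn => ?_
    rw [ad_pow' U (D U) n, Finset.smul_sum]
    refine sum_congr rfl fun i hi => ?_
    rw [smul_smul]
  rw [hR1]
  -- Step 3: triangle reindex of the right-hand side
  have hR2 : (∑ n ∈ range (2 * N + 1), ∑ i ∈ range (n + 1),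
        ((((n + 1).factorial : ℚ))⁻¹ * ((-1) ^ (n - i) * (n.choose i))) •
          (U ^ i * D U * U ^ (n - i))) =
      ∑ i ∈ range (2 * N + 1), ∑ j ∈ range (2 * N + 1 - i),
        ((((i + j + 1).factorial : ℚ))⁻¹ * ((-1) ^ j * ((i + j).choose i))) •
          (U ^ i * D U * U ^ j) := by
    rw [← tri' (2 * N + 1) (fun i j =>
      ((((i + j + 1).factorial : ℚ))⁻¹ * ((-1) ^ j * ((i + j).choose i))) •
        (U ^ i * D U * U ^ j))]
    refine sum_congr rfl fun n hn => sum_congr rfl fun i hi => ?_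
    have hin : i ≤ n := by simpa [Nat.lt_succ_iff] using hi
    have : i + (n - i) = n := by omega
    rw [this]
  rw [hR2]
  -- shrink the RHS double sum to range N × range N
  have hR3 : (∑ i ∈ range (2 * N + 1), ∑ j ∈ range (2 * N + 1 - i),
        ((((i + j + 1).factorial : ℚ))⁻¹ * ((-1) ^ j * ((i + j).choose i))) •
          (U ^ i * D U * U ^ j)) =
      ∑ i ∈ range N, ∑ j ∈ range N,
        ((((i + j + 1).factorial : ℚ))⁻¹ * ((-1) ^ j * ((i + j).choose i))) •
          (U ^ i * D U * U ^ j) := by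
    rw [← Finset.sum_subset (Finset.range_subset_range.mpr (show N ≤ 2 * N + 1 by omega))]
    · refine sum_congr rfl fun i hi => ?_
      have hiN : i < N := mem_range.mp hi
      rw [← Finset.sum_subset (Finset.range_subset_range.mpr (show N ≤ 2 * N + 1 - i by omega))]
      intro j hj hjN
      rw [hS i j (Or.inr (by simpa using hjN)), smul_zero]
    · intro i hi hiN
      refine Finset.sum_eq_zero fun j hj => ?_
      rw [hS i j (Or.inl (by simpa using hiN)), smul_zero]
  rw [hR3]
  -- Step 4: triangle reindex of the LHS in (n, k) for each m; first swap sums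
  rw [Finset.sum_comm]
  have hL2 : ∀ m, (∑ n ∈ range (2 * N + 1), ∑ k ∈ range n,
        (((n.factorial : ℚ))⁻¹ * ((-1) ^ m * ((m.factorial : ℚ))⁻¹)) •
          (U ^ k * D U * U ^ (n - 1 - k + m))) =
      ∑ i ∈ range (2 * N), ∑ l ∈ range (2 * N - i),
        ((((i + l + 1).factorial : ℚ))⁻¹ * ((-1) ^ m * ((m.factorial : ℚ))⁻¹)) •
          (U ^ i * D U * U ^ (l + m)) := by
    intro m
    rw [Finset.sum_range_succ' (fun n => ∑ k ∈ range n,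
      (((n.factorial : ℚ))⁻¹ * ((-1) ^ m * ((m.factorial : ℚ))⁻¹)) •
        (U ^ k * D U * U ^ (n - 1 - k + m))) (2 * N)]
    rw [← tri' (2 * N) (fun i l =>
      ((((i + l + 1).factorial : ℚ))⁻¹ * ((-1) ^ m * ((m.factorial : ℚ))⁻¹)) •
        (U ^ i * D U * U ^ (l + m)))]
    simp only [range_zero, sum_empty, add_zero]
    refine sum_congr rfl fun n hn => sum_congr rfl fun k hk => ?_
    have hkn : k ≤ n := by simpa [Nat.lt_succ_iff] using hk
    have e1 : k + (n - k) + 1 = n + 1 := by omega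
    have e2 : n + 1 - 1 - k = n - k := by omega
    rw [e1, e2]
  rw [Finset.sum_congr rfl fun m _ => hL2 m]
  -- shrink LHS sums: m to range N, i to range N, l to range N
  have hL3 : (∑ m ∈ range (2 * N + 1), ∑ i ∈ range (2 * N), ∑ l ∈ range (2 * N - i),
        ((((i + l + 1).factorial : ℚ))⁻¹ * ((-1) ^ m * ((m.factorial : ℚ))⁻¹)) •
          (U ^ i * D U * U ^ (l + m))) =
      ∑ m ∈ range N, ∑ i ∈ range N, ∑ l ∈ range N,
        ((((i + l + 1).factorial : ℚ))⁻¹ * ((-1) ^ m * ((m.factorial : ℚ))⁻¹)) •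
          (U ^ i * D U * U ^ (l + m)) := by
    rw [← Finset.sum_subset (Finset.range_subset_range.mpr (show N ≤ 2 * N + 1 by omega))]
    · refine sum_congr rfl fun m hm => ?_
      rw [← Finset.sum_subset (Finset.range_subset_range.mpr (show N ≤ 2 * N by omega))]
      · refine sum_congr rfl fun i hi => ?_
        have hiN : i < N := mem_range.mp hi
        rw [← Finset.sum_subset (Finset.range_subset_range.mpr (show N ≤ 2 * N - i by omega))]
        intro l hl hlN
        rw [hS i (l + m) (Or.inr (by simp at hlN; omega)), smul_zero]
      · intro i hi hiN
        refine Finset.sum_eq_zero fun l hl => ?_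
        rw [hS i (l + m) (Or.inl (by simpa using hiN)), smul_zero]
    · intro m hm hmN
      refine Finset.sum_eq_zero fun i hi => Finset.sum_eq_zero fun l hl => ?_
      rw [hS i (l + m) (Or.inr (by simp at hmN; omega)), smul_zero]
  rw [hL3]
  -- swap m and i
  rw [Finset.sum_comm]
  -- Step 5: for each i, regroup the (m, l) double sum along diagonals
  refine sum_congr rfl fun i hi => ?_
  have key : (∑ m ∈ range N, ∑ l ∈ range N,
        ((((i + l + 1).factorial : ℚ))⁻¹ * ((-1) ^ m * ((m.factorial : ℚ))⁻¹)) •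
          (U ^ i * D U * U ^ (l + m))) =
      ∑ j ∈ range N, ∑ m ∈ range (j + 1),
        ((((i + (j - m) + 1).factorial : ℚ))⁻¹ * ((-1) ^ m * ((m.factorial : ℚ))⁻¹)) •
          (U ^ i * D U * U ^ j) := by
    have ext1 : ∀ m ∈ range N, (∑ l ∈ range N,
        ((((i + l + 1).factorial : ℚ))⁻¹ * ((-1) ^ m * ((m.factorial : ℚ))⁻¹)) •
          (U ^ i * D U * U ^ (l + m))) =
        ∑ l ∈ range (N - m),
        ((((i + l + 1).factorial : ℚ))⁻¹ * ((-1) ^ m * ((m.factorial : ℚ))⁻¹)) •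
          (U ^ i * D U * U ^ (l + m)) := by
      intro m hm
      refine (Finset.sum_subset (Finset.range_subset_range.mpr (by omega)) ?_).symm
      intro l hl hlN
      simp only [mem_range] at hm hl hlN
      rw [hS i (l + m) (Or.inr (by omega)), smul_zero]
    rw [Finset.sum_congr rfl ext1, ← tri' N (fun m l =>
      ((((i + l + 1).factorial : ℚ))⁻¹ * ((-1) ^ m * ((m.factorial : ℚ))⁻¹)) •
        (U ^ i * D U * U ^ (l + m)))]
    refine sum_congr rfl fun j hj => sum_congr rfl fun m hm => ?_
    have hmj : m ≤ j := by simpa [Nat.lt_succ_iff] using hm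
    have e : j - m + m = j := by omega
    rw [e]
  rw [key]
  refine sum_congr rfl fun j hj => ?_
  rw [← Finset.sum_smul, coef_eq']
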